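/- Let m ≥ 1, let d_1,…,d_m be strictly positive real numbers, and let K be a real number with |K| < ∏_{j=1}^{m} d_j. Then every complex root of the polynomial z ↦ ∏_{j=1}^{m} (z + d_j) − K has strictly negative real part. -/

import Mathlib

/-- Let `m ≥ 1`, let `d_1,…,d_m > 0`, and let `K` be real with `|K| < ∏ d_j`.
Then every complex root of `z ↦ ∏_{j=1}^m (z + d_j) − K` has strictly negative
real part. -/
theorem roots_neg_re_of_abs_lt (m : ℕ) (hm : 1 ≤ m)
    (d : Fin m → ℝ) (hd : ∀ j, 0 < d j)
    (K : ℝ) (hK : |K| < ∏ j : Fin m, d j) :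
    ∀ z : ℂ, (∏ j : Fin m, (z + (d j : ℂ))) - (K : ℂ) = 0 → z.re < 0 := by
  intro z hz
  by_contra h
  push_neg at h
  have hz' : (∏ j : Fin m, (z + (d j : ℂ))) = (K : ℂ) := by linear_combination hz
  have h1 : ∀ j : Fin m, d j ≤ ‖z + (d j : ℂ)‖ := by
    intro j
    have hre : (z + (d j : ℂ)).re = z.re + d j := by simp
    calc d j ≤ z.re + d j := by linarith
    _ ≤ |(z + (d j : ℂ)).re| := by rw [hre]; exact le_abs_self _
    _ ≤ ‖z + (d j : ℂ)‖ := Complex.abs_re_le_norm _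
  have h2 : ∏ j : Fin m, d j ≤ ∏ j : Fin m, ‖z + (d j : ℂ)‖ :=
    Finset.prod_le_prod (fun j _ => (hd j).le) (fun j _ => h1 j)
  have h3 : ∏ j : Fin m, ‖z + (d j : ℂ)‖ = |K| := by
    rw [← norm_prod, hz', Complex.norm_real, Real.norm_eq_abs]
  linarith
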